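/- Let A : ℕ → Matrix (Fin m) (Fin n) ℝ be a sequence of real matrices converging entrywise to a matrix A₀ (i.e. for all indices i, j, the sequence p ↦ A p i j tends to A₀ i j), and suppose there is r such that the rank of A p equals r for every p. Then the rank of A₀ is at most r. -/

import Mathlib

open Filter Matrix

/-- If a sequence of real `m × n` matrices converges entrywise to `A₀` and each matrix in the
sequence has rank `r`, then the rank of `A₀` is at most `r`. -/
theorem rank_of_entrywise_limit_le {m n : ℕ} (A : ℕ → Matrix (Fin m) (Fin n) ℝ)
    (A₀ : Matrix (Fin m) (Fin n) ℝ)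
    (hconv : ∀ i j, Tendsto (fun p => A p i j) atTop (nhds (A₀ i j)))
    (r : ℕ) (hrank : ∀ p, (A p).rank = r) :
    A₀.rank ≤ r := by
  classical
  -- choose a linearly independent set of columns of `A₀` spanning its column space
  obtain ⟨b, hbsub, hbspan, hbind⟩ :=
    exists_linearIndependent ℝ (Set.range (A₀ᵀ : Matrix (Fin n) (Fin m) ℝ))
  have hbfin : b.Finite := by
    have : Set.Finite (Set.range (A₀ᵀ : Matrix (Fin n) (Fin m) ℝ)) := Set.finite_range _
    exact this.subset hbsub
  haveI : Fintype b := hbfin.fintype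
  -- pick column indices realizing the elements of `b`
  have ht : ∀ x : b, ∃ j : Fin n, A₀ᵀ j = (x : Fin m → ℝ) := fun x => hbsub x.2
  choose t htspec using ht
  -- the rank of `A₀` equals the cardinality of `b`
  have hcard : A₀.rank = Fintype.card b := by
    rw [Matrix.rank_eq_finrank_span_cols, Matrix.col, ← hbspan]
    have := finrank_span_set_eq_card (R := ℝ) (s := b) hbind
    simpa [Set.toFinset_card] using this
  -- submatrices and Gram matrices
  set B : ℕ → Matrix (Fin m) b ℝ := fun p => (A p).submatrix id t with hB
  set B₀ : Matrix (Fin m) b ℝ := A₀.submatrix id t with hB₀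
  set G : ℕ → Matrix b b ℝ := fun p => (B p)ᵀ * B p with hG
  set G₀ : Matrix b b ℝ := B₀ᵀ * B₀ with hG₀
  -- columns of B₀ are exactly the elements of b
  have hBcol : ∀ x : b, (B₀ᵀ : Matrix b (Fin m) ℝ) x = (x : Fin m → ℝ) := by
    intro x
    funext i
    simpa [hB₀, Matrix.transpose_apply, Matrix.submatrix_apply] using
      congrFun (htspec x) i
  -- B₀ has linearly independent columns, so B₀.mulVec is injective
  have hBinj : Function.Injective B₀.mulVec := by
    intro v w hvw
    have hsum : ∀ u : b → ℝ, B₀.mulVec u = ∑ x : b, u x • (x : Fin m → ℝ) := by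
      intro u
      funext i
      simp only [Matrix.mulVec, dotProduct, Finset.sum_apply, Pi.smul_apply,
        smul_eq_mul]
      refine Finset.sum_congr rfl fun x _ => ?_
      have := congrFun (hBcol x) i
      simp only [Matrix.transpose_apply] at this
      rw [← this]; ring
    have h0 : ∑ x : b, (v x - w x) • (x : Fin m → ℝ) = 0 := by
      have : B₀.mulVec v - B₀.mulVec w = 0 := by rw [hvw]; simp
      rw [hsum, hsum] at this
      simpa [sub_smul, Finset.sum_sub_distrib] using this
    have := (Fintype.linearIndependent_iff.mp hbind) (fun x => v x - w x) h0
    funext x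
    have h := this x
    linarith
  -- hence det G₀ ≠ 0
  have hdet₀ : G₀.det ≠ 0 := by
    have hGinj : Function.Injective G₀.mulVec := by
      intro v w hvw
      apply hBinj
      have hdot : ∀ u : b → ℝ, dotProduct u (G₀.mulVec u) =
          dotProduct (B₀.mulVec u) (B₀.mulVec u) := by
        intro u
        rw [hG₀, ← Matrix.mulVec_mulVec, dotProduct_mulVec, Matrix.vecMul_transpose]
      -- show B₀ (v - w) = 0 using the quadratic form
      have hzero : G₀.mulVec (v - w) = 0 := by
        have : G₀.mulVec v - G₀.mulVec w = 0 := by rw [hvw]; simp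
        simpa [Matrix.mulVec_sub] using this
      have hq : dotProduct (B₀.mulVec (v - w)) (B₀.mulVec (v - w)) = 0 := by
        rw [← hdot, hzero, dotProduct_zero]
      have hBz : B₀.mulVec (v - w) = 0 := by
        funext i
        have hle : ∀ i, 0 ≤ B₀.mulVec (v - w) i * B₀.mulVec (v - w) i :=
          fun i => mul_self_nonneg _
        have := (Finset.sum_eq_zero_iff_of_nonneg (fun i _ => hle i)).mp hq i
          (Finset.mem_univ i)
        have := mul_self_eq_zero.mp this
        simpa using this
      have : B₀.mulVec v - B₀.mulVec w = 0 := by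
        simpa [Matrix.mulVec_sub] using hBz
      have := sub_eq_zero.mp this
      exact this
    have := Matrix.mulVec_injective_iff_isUnit.mp hGinj
    exact (Matrix.isUnit_iff_isUnit_det G₀).mp this |>.ne_zero
  -- entrywise convergence of Gram matrices, hence of determinants
  have hGconv : Tendsto (fun p => G p) atTop (nhds G₀) := by
    refine tendsto_pi_nhds.mpr ?_
    intro x
    rw [tendsto_pi_nhds]
    intro y
    have : ∀ p, G p x y = ∑ i : Fin m, A p i (t x) * A p i (t y) := by
      intro p
      simp [hG, hB, Matrix.mul_apply, Matrix.transpose_apply, Matrix.submatrix_apply]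
    have h0 : G₀ x y = ∑ i : Fin m, A₀ i (t x) * A₀ i (t y) := by
      simp [hG₀, hB₀, Matrix.mul_apply, Matrix.transpose_apply, Matrix.submatrix_apply]
    simp only [this, h0]
    exact tendsto_finset_sum _ fun i _ => ((hconv i (t x)).mul (hconv i (t y)))
  have hdetconv : Tendsto (fun p => (G p).det) atTop (nhds G₀.det) :=
    ((Continuous.matrix_det continuous_id).tendsto G₀).comp hGconv
  -- eventually det (G p) ≠ 0
  have hev : ∀ᶠ p in atTop, (G p).det ≠ 0 := hdetconv.eventually_ne hdet₀
  obtain ⟨p, hp⟩ := hev.exists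
  -- rank chain
  have h1 : (G p).rank = Fintype.card b :=
    Matrix.rank_of_isUnit _ ((Matrix.isUnit_iff_isUnit_det _).mpr (isUnit_iff_ne_zero.mpr hp))
  have h2 : (G p).rank = (B p).rank := Matrix.rank_transpose_mul_self _
  have h3 : (B p).rank ≤ (A p).rank := by
    rw [Matrix.rank_eq_finrank_span_cols, Matrix.rank_eq_finrank_span_cols]
    apply Submodule.finrank_mono
    apply Submodule.span_mono
    rintro - ⟨x, rfl⟩
    exact ⟨t x, by funext i; simp [hB, Matrix.transpose_apply, Matrix.submatrix_apply]⟩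
  calc A₀.rank = Fintype.card b := hcard
    _ = (G p).rank := h1.symm
    _ = (B p).rank := h2
    _ ≤ (A p).rank := h3
    _ = r := hrank p
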